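/- The second kind Genocchi polynomials can be expressed through the classical Genocchi numbers as 𝒢_n(x) = Σ_{k=0}^n Σ_{j=0}^{n-k} (n! / (k! j! (n-k-j)!)) 2^{k-1} x^{n-k-j} G_k, where G_k are the classical Genocchi numbers. -/

import Mathlib

/-- Series of `e^{xt}` : coefficients `x^n/n!`. -/
noncomputable def expS (x : ℝ) : PowerSeries ℝ :=
  PowerSeries.mk fun n => x ^ n / n.factorial

/-- Series of `e^{t} + e^{-t}` : coefficients `(1+(-1)^n)/n!`. -/
noncomputable def coshS : PowerSeries ℝ :=
  PowerSeries.mk fun n => (1 + (-1 : ℝ) ^ n) / n.factorial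

/-- Series of `e^{y t^j}` : coefficients `y^{n/j}/(n/j)!` when `j ∣ n`. -/
noncomputable def expTail (j : ℕ) (y : ℝ) : PowerSeries ℝ :=
  PowerSeries.mk fun n => if j ∣ n then y ^ (n / j) / (n / j).factorial else 0


open PowerSeries

lemma expS_eq (x : ℝ) : expS x = PowerSeries.rescale x (PowerSeries.exp ℝ) := by
  ext n
  simp [expS, PowerSeries.coeff_rescale, PowerSeries.coeff_exp]
  ring

lemma coshS_eq : coshS = PowerSeries.rescale 1 (PowerSeries.exp ℝ) +
    PowerSeries.rescale (-1) (PowerSeries.exp ℝ) := by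
  ext n
  simp [coshS, PowerSeries.coeff_rescale, PowerSeries.coeff_exp]
  ring

theorem second_kind_genocchi_double_sum (G : ℕ → ℝ) (SG : ℕ → ℝ → ℝ)
    (hG : ((PowerSeries.mk fun n => (1 : ℝ) / n.factorial) + 1) *
        PowerSeries.mk (fun n => G n / n.factorial) = 2 * PowerSeries.X)
    (hSG : ∀ x : ℝ, coshS * PowerSeries.mk (fun n => SG n x / n.factorial) =
        2 * PowerSeries.X * expS x) :
    ∀ (n : ℕ) (x : ℝ),
      SG n x = ∑ k ∈ Finset.range (n + 1), ∑ j ∈ Finset.range (n - k + 1),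
        (n.factorial : ℝ) / (k.factorial * j.factorial * (n - k - j).factorial) *
          (2 : ℝ) ^ ((k : ℤ) - 1) * x ^ (n - k - j) * G k := by
  intro n x
  have hexp1 : (PowerSeries.mk fun n => (1:ℝ)/n.factorial) = PowerSeries.exp ℝ := by
    ext n; simp [PowerSeries.coeff_exp]
  rw [hexp1] at hG
  have hG2 : (rescale (2:ℝ) (PowerSeries.exp ℝ) + 1) *
      rescale 2 (PowerSeries.mk fun n => G n / n.factorial) = 4 * PowerSeries.X := by
    have h := congrArg (rescale (2:ℝ)) hG
    simp only [map_mul, map_add, map_one, map_ofNat, rescale_X] at h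
    rw [h]; ring
  have h1 : rescale (-1:ℝ) (PowerSeries.exp ℝ) * rescale 2 (PowerSeries.exp ℝ)
      = rescale 1 (PowerSeries.exp ℝ) := by
    rw [PowerSeries.exp_mul_exp_eq_exp_add]; norm_num
  have h3 : rescale (-1:ℝ) (PowerSeries.exp ℝ) * rescale (x+1) (PowerSeries.exp ℝ)
      = rescale x (PowerSeries.exp ℝ) := by
    rw [PowerSeries.exp_mul_exp_eq_exp_add]; ring_nf
  have hC : (PowerSeries.C (1/2 : ℝ)) * 4 = 2 := by
    rw [show (4 : PowerSeries ℝ) = PowerSeries.C 4 from (map_ofNat _ 4).symm, ← map_mul,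
      show (1/2 : ℝ) * 4 = 2 by norm_num]
    exact map_ofNat _ 2
  have hKey : coshS * (PowerSeries.C (1/2) * rescale 2 (PowerSeries.mk fun n => G n / n.factorial)
        * rescale (x+1) (PowerSeries.exp ℝ)) = 2 * PowerSeries.X * expS x := by
    rw [coshS_eq, expS_eq]
    linear_combination (-(PowerSeries.C (1/2) * rescale (x+1) (PowerSeries.exp ℝ) *
        rescale 2 (PowerSeries.mk fun n => G n / n.factorial))) * h1 +
      (PowerSeries.C (1/2) * rescale (x+1) (PowerSeries.exp ℝ) *
        rescale (-1:ℝ) (PowerSeries.exp ℝ)) * hG2 +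
      (PowerSeries.X * rescale x (PowerSeries.exp ℝ)) * hC +
      (PowerSeries.C (1/2) * 4 * PowerSeries.X) * h3
  have hcosh0 : coshS ≠ 0 := by
    intro h
    have h0 := congrArg (PowerSeries.coeff 0) h
    simp [coshS] at h0
  have hEq := mul_left_cancel₀ hcosh0 ((hSG x).trans hKey.symm)
  have hc := congrArg (PowerSeries.coeff n) hEq
  rw [mul_assoc, PowerSeries.coeff_C_mul, PowerSeries.coeff_mk, PowerSeries.coeff_mul,
      Finset.Nat.sum_antidiagonal_eq_sum_range_succ_mk] at hc
  simp only [rescale_mk, PowerSeries.coeff_mk, PowerSeries.coeff_rescale,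
      PowerSeries.coeff_exp, map_div₀, map_one, map_natCast] at hc
  have hn : (n.factorial : ℝ) ≠ 0 := Nat.cast_ne_zero.mpr n.factorial_ne_zero
  rw [div_eq_iff hn] at hc
  rw [hc, Finset.mul_sum, Finset.sum_mul]
  refine Finset.sum_congr rfl fun k hk => ?_
  have hk' : k ≤ n := Nat.lt_succ_iff.mp (Finset.mem_range.mp hk)
  rw [add_pow, ← Finset.sum_range_reflect]
  simp only [Finset.mul_sum, Finset.sum_mul]
  refine Finset.sum_congr rfl fun j hj => ?_
  have hj' : j ≤ n - k := Nat.lt_succ_iff.mp (Finset.mem_range.mp hj)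
  rw [Nat.add_sub_cancel, Nat.sub_sub_self hj', Nat.choose_symm hj']
  have h2 : (2:ℝ)^((k:ℤ)-1) = 2^k / 2 := by
    rw [zpow_sub₀ two_ne_zero, zpow_natCast, zpow_one]
  rw [h2, Nat.cast_choose ℝ hj']
  have e1 : (k.factorial : ℝ) ≠ 0 := Nat.cast_ne_zero.mpr k.factorial_ne_zero
  have e2 : (j.factorial : ℝ) ≠ 0 := Nat.cast_ne_zero.mpr j.factorial_ne_zero
  have e3 : ((n-k).factorial : ℝ) ≠ 0 := Nat.cast_ne_zero.mpr (n-k).factorial_ne_zero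
  have e4 : ((n-k-j).factorial : ℝ) ≠ 0 := Nat.cast_ne_zero.mpr (n-k-j).factorial_ne_zero
  field_simp
  ring
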